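/- Let 1 < p < ∞ and k > 1, and consider in (ℝ², ‖·‖_p) the unit vector (x_0, y_0) = (1/(1+k^p)^{1/p}, k/(1+k^p)^{1/p}). If (x_1, y_1) is a unit vector of (ℝ², ‖·‖_p) such that (x_0, y_0) is Birkhoff-James orthogonal to (x_1, y_1), then (x_1, y_1) = ±( -k^{p-1}/(1+k^{p(p-1)})^{1/p}, 1/(1+k^{p(p-1)})^{1/p} ). -/

import Mathlib

/-- The vector `(a, b)` viewed as an element of `(ℝ², ‖·‖_p)`. -/
noncomputable def vecP (p : ℝ) (a b : ℝ) : PiLp (ENNReal.ofReal p) (fun _ : Fin 2 => ℝ) :=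
  (WithLp.equiv (ENNReal.ofReal p) (Fin 2 → ℝ)).symm ![a, b]

theorem stmt_6 (p : ℝ) (hp : 1 < p) (k : ℝ) (hk : 1 < k)
    [Fact (1 ≤ ENNReal.ofReal p)]
    (v : PiLp (ENNReal.ofReal p) (fun _ : Fin 2 => ℝ)) (hv : ‖v‖ = 1)
    (horth : ∀ l : ℝ,
      ‖vecP p (1 / (1 + k ^ p) ^ (1 / p)) (k / (1 + k ^ p) ^ (1 / p))‖ ≤
        ‖vecP p (1 / (1 + k ^ p) ^ (1 / p)) (k / (1 + k ^ p) ^ (1 / p)) + l • v‖) :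
    v = vecP p (-(k ^ (p - 1)) / (1 + k ^ (p * (p - 1))) ^ (1 / p))
          (1 / (1 + k ^ (p * (p - 1))) ^ (1 / p)) ∨
    v = -vecP p (-(k ^ (p - 1)) / (1 + k ^ (p * (p - 1))) ^ (1 / p))
          (1 / (1 + k ^ (p * (p - 1))) ^ (1 / p)) := by
  have hp0 : (0:ℝ) < p := lt_trans one_pos hp
  have hk0 : (0:ℝ) < k := lt_trans one_pos hk
  have htop : (ENNReal.ofReal p).toReal = p := ENNReal.toReal_ofReal hp0.le
  have htop' : (0:ℝ) < (ENNReal.ofReal p).toReal := by rw [htop]; exact hp0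
  set A : ℝ := (1 + k ^ p) ^ (1 / p) with hA_def
  have h1k : (0:ℝ) < 1 + k ^ p := by positivity
  have hA : (0:ℝ) < A := Real.rpow_pos_of_pos h1k _
  set x0 : ℝ := 1 / A with hx0_def
  set y0 : ℝ := k / A with hy0_def
  have hx0 : 0 < x0 := by positivity
  have hy0 : 0 < y0 := by positivity
  -- the function g
  set g : ℝ → ℝ := fun l => |x0 + l * v 0| ^ p + |y0 + l * v 1| ^ p with hg_def
  have hg_nonneg : ∀ l, 0 ≤ g l := by intro l; positivity
  -- norm computation
  have hnorm : ∀ l : ℝ, ‖vecP p x0 y0 + l • v‖ = (g l) ^ (1/p) := by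
    intro l
    rw [PiLp.norm_eq_sum htop']
    simp only [htop, Fin.sum_univ_two, Real.norm_eq_abs, PiLp.add_apply, PiLp.smul_apply,
      smul_eq_mul, vecP, WithLp.equiv_symm_apply, PiLp.toLp_apply, Matrix.cons_val_zero, Matrix.cons_val_one,
      Matrix.head_cons]
    rfl
  have hmin : ∀ l, g 0 ≤ g l := by
    intro l
    have h := horth l
    have h0 := hnorm 0
    simp only [zero_smul, add_zero] at h0
    rw [h0, hnorm l] at h
    have := Real.rpow_le_rpow (by positivity) h hp0.le
    rw [← Real.rpow_mul (hg_nonneg 0), ← Real.rpow_mul (hg_nonneg l),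
      one_div_mul_cancel hp0.ne', Real.rpow_one, Real.rpow_one] at this
    exact this
  -- differentiability
  have hderiv : ∀ (c : ℝ) (w : ℝ), 0 < c →
      HasDerivAt (fun l : ℝ => |c + l * w| ^ p) (w * p * c ^ (p - 1)) 0 := by
    intro c w hc
    have hlin : HasDerivAt (fun l : ℝ => c + l * w) w 0 :=
      (hasDerivAt_mul_const w).const_add c
    have hrpow : HasDerivAt (fun l : ℝ => (c + l * w) ^ p) (w * p * c ^ (p - 1)) 0 := by
      have := hlin.rpow_const (p := p) (Or.inr hp.le)
      simpa using this
    apply hrpow.congr_of_eventuallyEq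
    have hc' : (0:ℝ) < c + 0 * w := by simpa using hc
    have hcont : ContinuousAt (fun l : ℝ => c + l * w) 0 := by fun_prop
    have hev : ∀ᶠ l in nhds (0:ℝ), 0 < c + l * w := hcont (Ioi_mem_nhds hc')
    filter_upwards [hev] with l hl
    rw [abs_of_pos hl]
  have hg_deriv : HasDerivAt g (v 0 * p * x0 ^ (p - 1) + v 1 * p * y0 ^ (p - 1)) 0 :=
    (hderiv x0 (v 0) hx0).add (hderiv y0 (v 1) hy0)
  have hD : v 0 * p * x0 ^ (p - 1) + v 1 * p * y0 ^ (p - 1) = 0 := by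
    have hloc : IsLocalMin g 0 := Filter.Eventually.of_forall hmin
    exact hloc.hasDerivAt_eq_zero hg_deriv
  -- key linear relation
  have hy0p : y0 ^ (p - 1) = k ^ (p - 1) * x0 ^ (p - 1) := by
    rw [hx0_def, hy0_def, Real.div_rpow hk0.le hA.le, Real.div_rpow zero_le_one hA.le,
      Real.one_rpow]
    ring
  have hx0p : (0:ℝ) < x0 ^ (p - 1) := Real.rpow_pos_of_pos hx0 _
  have hkey : v 0 = -(k ^ (p - 1)) * v 1 := by
    rw [hy0p] at hD
    have h1 : (v 0 + k ^ (p - 1) * v 1) * (p * x0 ^ (p - 1)) = 0 := by linear_combination hD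
    have h2 := (mul_eq_zero.mp h1).resolve_right (by positivity)
    linarith
  -- norm of v
  have hvsum : |v 0| ^ p + |v 1| ^ p = 1 := by
    rw [PiLp.norm_eq_sum htop'] at hv
    simp only [htop, Fin.sum_univ_two, Real.norm_eq_abs] at hv
    have hS0 : (0:ℝ) ≤ |v 0| ^ p + |v 1| ^ p := by positivity
    have h := congrArg (fun t : ℝ => t ^ p) hv
    simp only [← Real.rpow_mul hS0, one_div_mul_cancel hp0.ne', Real.rpow_one,
      Real.one_rpow] at h
    exact h
  set K : ℝ := k ^ (p * (p - 1)) with hK_def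
  have hK0 : (0:ℝ) < K := Real.rpow_pos_of_pos hk0 _
  set B : ℝ := (1 + K) ^ (1 / p) with hB_def
  have hB : (0:ℝ) < B := Real.rpow_pos_of_pos (by positivity) _
  have hkp : (0:ℝ) < k ^ (p - 1) := Real.rpow_pos_of_pos hk0 _
  have habs0 : |v 0| = k ^ (p - 1) * |v 1| := by
    rw [hkey, abs_mul, abs_neg, abs_of_pos hkp]
  have hKeq : (k ^ (p - 1)) ^ p = K := by
    rw [hK_def, ← Real.rpow_mul hk0.le]
    ring_nf
  have hv1p : |v 1| ^ p = 1 / (1 + K) := by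
    have h1 : (k ^ (p - 1) * |v 1|) ^ p = K * |v 1| ^ p := by
      rw [Real.mul_rpow hkp.le (abs_nonneg _), hKeq]
    rw [habs0, h1] at hvsum
    field_simp
    linarith
  have hv1abs : |v 1| = 1 / B := by
    have h1 : |v 1| = (|v 1| ^ p) ^ (1 / p) := by
      rw [← Real.rpow_mul (abs_nonneg _), mul_one_div_cancel hp0.ne', Real.rpow_one]
    rw [h1, hv1p, hB_def, Real.div_rpow zero_le_one (by positivity), Real.one_rpow]
  rcases (abs_eq (by positivity)).mp hv1abs with h1 | h1
  · left
    ext i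
    fin_cases i
    · show v 0 = _
      simp only [Fin.mk_zero, Fin.mk_one, vecP, WithLp.equiv_symm_apply, PiLp.toLp_apply, Matrix.cons_val_zero]
      rw [hkey, h1]
      ring
    · show v 1 = _
      simp only [Fin.mk_zero, Fin.mk_one, vecP, WithLp.equiv_symm_apply, PiLp.toLp_apply, Matrix.cons_val_one, Matrix.head_cons]
      exact h1
  · right
    ext i
    fin_cases i
    · show v 0 = _
      simp only [Fin.mk_zero, Fin.mk_one, PiLp.neg_apply, vecP, WithLp.equiv_symm_apply, PiLp.toLp_apply, Matrix.cons_val_zero]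
      rw [hkey, h1]
      ring
    · show v 1 = _
      simp only [Fin.mk_zero, Fin.mk_one, PiLp.neg_apply, vecP, WithLp.equiv_symm_apply, PiLp.toLp_apply, Matrix.cons_val_one,
        Matrix.head_cons, Matrix.cons_val_zero]
      rw [h1]
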